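/- arXiv:1908.08619 — 2 statements merged into one kernel-verified Lean document; each statement's English description precedes it below -/
import Mathlib

section
/- Under the unweighted K-NN classification utility with sorted training points, the Shapley values admit the closed form: for every i with K ≤ i ≤ N, s_i = 1[y_i = y_test]/i − ∑_{j=i+1}^{N} 1[y_j = y_test]/(j(j−1)); and for every i with 1 ≤ i ≤ K−1, s_i = 1[y_i = y_test]/K − ∑_{j=K+1}^{N} 1[y_j = y_test]/(j(j−1)). -/
open Finset

/-- The Shapley value of player `i` in the cooperative game with player set `P`
and utility function `ν`. -/
noncomputable def shapley (P : Finset ℕ) (ν : Finset ℕ → ℝ) (i : ℕ) : ℝ :=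
  (1 / (P.card : ℝ)) * ∑ S ∈ (P.erase i).powerset,
    (1 / ((P.card - 1).choose S.card : ℝ)) * (ν (insert i S) - ν S)

/-- The unweighted K-NN classification utility: training points are sorted by
increasing distance to the test point, so the k-th nearest neighbor within `S`
is the k-th smallest element of `S` (given by the sorted list of `S`). -/
noncomputable def knnUtil (K : ℕ) (y : ℕ → ℕ) (ytest : ℕ) (S : Finset ℕ) : ℝ :=
  (1 / (K : ℝ)) * ∑ k ∈ Finset.range (min K S.card),
    if y ((S.sort (· ≤ ·)).getD k 0) = ytest then (1 : ℝ) else 0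

lemma filter_lt_sort_card (S : Finset ℕ) (k : ℕ) (hk : k < S.card) :
    (S.filter (· < (S.sort (· ≤ ·)).getD k 0)).card = k := by
  set l := S.sort (· ≤ ·) with hl
  have hlen : l.length = S.card := Finset.length_sort _
  have hk' : k < l.length := by omega
  have hnd : l.Nodup := Finset.sort_nodup _ _
  have hsorted : l.Pairwise (· < ·) :=
    ((Finset.pairwise_sort S (· ≤ ·)).and hnd).imp (fun h => lt_of_le_of_ne h.1 h.2)
  have hget : l.getD k 0 = l.get ⟨k, hk'⟩ := List.getD_eq_get l 0 ⟨k, hk'⟩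
  have hmono : ∀ i j : Fin l.length, i < j → l.get i < l.get j := by
    intro i j hij
    exact List.pairwise_iff_get.mp hsorted i j hij
  have hfe : S.filter (· < l.getD k 0) = (l.take k).toFinset := by
    ext x
    simp only [mem_filter, List.mem_toFinset]
    constructor
    · rintro ⟨hxS, hx⟩
      have : x ∈ l := by rw [hl, Finset.mem_sort]; exact hxS
      obtain ⟨i, hi⟩ := List.mem_iff_get.mp this
      have hik : (i : ℕ) < k := by
        by_contra h
        have : l.get ⟨k, hk'⟩ ≤ l.get i := by
          rcases eq_or_lt_of_le (not_lt.mp h) with h' | h'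
          · exact le_of_eq (congrArg l.get (Fin.ext h'))
          · exact le_of_lt (hmono _ _ h')
        rw [hi] at this; rw [hget] at hx; omega
      rw [← hi]
      rw [List.mem_take_iff_getElem]
      exact ⟨i, by omega, by simp [List.getElem_take]⟩
    · intro hx
      have hxl : x ∈ l := List.mem_of_mem_take hx
      constructor
      · rw [hl, Finset.mem_sort] at hxl; exact hxl
      · rw [List.mem_take_iff_getElem] at hx
        obtain ⟨i, hi, hix⟩ := hx
        have hik : i < k := by omega
        rw [hget, ← hix]
        have : l.get ⟨i, by omega⟩ < l.get ⟨k, hk'⟩ := hmono _ _ (by simpa using hik)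
        simpa using this
  rw [hfe, List.toFinset_card_of_nodup (hnd.sublist (List.take_sublist _ _)),
    List.length_take]
  omega

lemma sum_sort_rank (S : Finset ℕ) (K : ℕ) (f : ℕ → ℝ) :
    ∑ k ∈ Finset.range (min K S.card), f ((S.sort (· ≤ ·)).getD k 0) =
    ∑ j ∈ S, if (S.filter (· < j)).card < K then f j else 0 := by
  set l := S.sort (· ≤ ·) with hl
  have hlen : l.length = S.card := Finset.length_sort _
  -- first: RHS as sum over range S.card
  have key : ∀ k ∈ Finset.range S.card,
      (if (S.filter (· < l.getD k 0)).card < K then f (l.getD k 0) else 0) =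
      (if k < K then f (l.getD k 0) else 0) := by
    intro k hk
    rw [Finset.mem_range] at hk
    rw [filter_lt_sort_card S k hk]
  have hbij : ∑ j ∈ S, (if (S.filter (· < j)).card < K then f j else 0) =
      ∑ k ∈ Finset.range S.card, (if (S.filter (· < l.getD k 0)).card < K then f (l.getD k 0) else 0) := by
    apply Finset.sum_nbij' (fun j => (l.idxOf j)) (fun k => l.getD k 0)
    · intro j hj
      rw [Finset.mem_range, ← hlen]
      exact List.idxOf_lt_length_iff.mpr (by rw [hl, Finset.mem_sort]; exact hj)
    · intro k hk
      rw [Finset.mem_range] at hk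
      have : l.getD k 0 ∈ l := by
        rw [List.getD_eq_getElem l 0 (by omega)]
        exact List.getElem_mem _
      rw [hl, Finset.mem_sort] at this; exact this
    · intro j hj
      have hjl : j ∈ l := by rw [hl, Finset.mem_sort]; exact hj
      have h1 : l.idxOf j < l.length := List.idxOf_lt_length_iff.mpr hjl
      rw [List.getD_eq_getElem l 0 h1]
      exact List.getElem_idxOf h1
    · intro k hk
      rw [Finset.mem_range] at hk
      rw [List.getD_eq_getElem l 0 (by omega)]
      exact (Finset.sort_nodup _ _).idxOf_getElem _ _
    · intro j hj
      have hjl : j ∈ l := by rw [hl, Finset.mem_sort]; exact hj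
      have h1 : l.idxOf j < l.length := List.idxOf_lt_length_iff.mpr hjl
      have h2 : l.getD (l.idxOf j) 0 = j := by
        rw [List.getD_eq_getElem l 0 h1]; exact List.getElem_idxOf h1
      rw [h2]
  rw [hbij, Finset.sum_congr rfl key]
  rw [← Finset.sum_range_add_sum_Ico _ (min_le_right K S.card)]
  have h1 : ∀ k ∈ Finset.range (min K S.card), (if k < K then f (l.getD k 0) else 0) = f (l.getD k 0) := by
    intro k hk; rw [Finset.mem_range] at hk
    rw [if_pos (lt_of_lt_of_le hk (min_le_left _ _))]
  have h2 : ∀ k ∈ Finset.Ico (min K S.card) S.card, (if k < K then f (l.getD k 0) else 0) = 0 := by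
    intro k hk; rw [Finset.mem_Ico] at hk
    rw [if_neg (by omega)]
  rw [Finset.sum_congr rfl h1, Finset.sum_congr rfl h2, Finset.sum_const, smul_zero, add_zero]

noncomputable def ind (y : ℕ → ℕ) (yt j : ℕ) : ℝ := if y j = yt then 1 else 0

lemma knnUtil_rank (K : ℕ) (y : ℕ → ℕ) (yt : ℕ) (S : Finset ℕ) :
    knnUtil K y yt S =
    (1 / (K : ℝ)) * ∑ j ∈ S, if (S.filter (· < j)).card < K then ind y yt j else 0 := by
  rw [knnUtil, sum_sort_rank S K (fun j => if y j = yt then (1:ℝ) else 0)]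
  rfl

lemma knn_diff (K : ℕ) (y : ℕ → ℕ) (yt : ℕ) (i : ℕ) (T : Finset ℕ)
    (hi : i ∉ T) (hi1 : i + 1 ∉ T) :
    knnUtil K y yt (insert i T) - knnUtil K y yt (insert (i+1) T) =
    (1 / (K : ℝ)) *
      (if (T.filter (· < i)).card < K then ind y yt i - ind y yt (i+1) else 0) := by
  rw [knnUtil_rank, knnUtil_rank, Finset.sum_insert hi, Finset.sum_insert hi1]
  have hsame : ∀ j ∈ T,
      (if ((insert i T).filter (· < j)).card < K then ind y yt j else 0) =
      (if ((insert (i+1) T).filter (· < j)).card < K then ind y yt j else 0) := by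
    intro j hj
    have hji : j ≠ i := fun h => hi (h ▸ hj)
    have hji1 : j ≠ i + 1 := fun h => hi1 (h ▸ hj)
    have h1 : ((insert i T).filter (· < j)).card =
        (T.filter (· < j)).card + (if i < j then 1 else 0) := by
      rw [Finset.filter_insert]
      split
      · rw [Finset.card_insert_of_notMem (fun h => hi (Finset.mem_filter.mp h).1)]
      · omega
    have h2 : ((insert (i+1) T).filter (· < j)).card =
        (T.filter (· < j)).card + (if i + 1 < j then 1 else 0) := by
      rw [Finset.filter_insert]
      split
      · rw [Finset.card_insert_of_notMem (fun h => hi1 (Finset.mem_filter.mp h).1)]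
      · omega
    rw [h1, h2]
    have h3 : ((T.filter (· < j)).card + if i < j then 1 else 0) =
        ((T.filter (· < j)).card + if i + 1 < j then 1 else 0) := by
      split_ifs <;> omega
    rw [h3]
  rw [Finset.sum_congr rfl hsame]
  have hm1 : ((insert i T).filter (· < i)).card = (T.filter (· < i)).card := by
    rw [Finset.filter_insert, if_neg (lt_irrefl i)]
  have hm2 : ((insert (i+1) T).filter (· < (i+1))).card = (T.filter (· < i)).card := by
    rw [Finset.filter_insert, if_neg (lt_irrefl (i+1))]
    congr 1
    apply Finset.filter_congr
    intro x hx
    have : x ≠ i := fun h => hi (h ▸ hx)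
    omega
  rw [hm1, hm2, ← mul_sub]
  congr 1
  split_ifs <;> ring

lemma knn_top (K : ℕ) (y : ℕ → ℕ) (yt : ℕ) (n : ℕ) (S : Finset ℕ)
    (hS : ∀ x ∈ S, x < n) :
    knnUtil K y yt (insert n S) - knnUtil K y yt S =
    (1 / (K : ℝ)) * (if S.card < K then ind y yt n else 0) := by
  have hn : n ∉ S := fun h => lt_irrefl n (hS n h)
  rw [knnUtil_rank, knnUtil_rank, Finset.sum_insert hn]
  have hsame : ∀ j ∈ S,
      (if ((insert n S).filter (· < j)).card < K then ind y yt j else 0) =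
      (if (S.filter (· < j)).card < K then ind y yt j else 0) := by
    intro j hj
    have : ((insert n S).filter (· < j)) = S.filter (· < j) := by
      rw [Finset.filter_insert, if_neg (by have := hS j hj; omega)]
    rw [this]
  rw [Finset.sum_congr rfl hsame]
  have hm : ((insert n S).filter (· < n)).card = S.card := by
    rw [Finset.filter_insert, if_neg (lt_irrefl n), Finset.filter_true_of_mem hS]
  rw [hm, mul_add]
  ring

lemma choose_harmonic (M k : ℕ) (hk : k + 1 ≤ M) :
    (1:ℝ)/(M.choose k) + 1/(M.choose (k+1)) = ((M:ℝ)+1)/((M:ℝ) * ((M-1).choose k)) := by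
  have key1 : M * ((M-1).choose k) = (M.choose (k+1)) * (k+1) := by
    have := Nat.add_one_mul_choose_eq (M-1) k
    rwa [Nat.sub_add_cancel (by omega)] at this
  have key2 : (M.choose (k+1)) * (k+1) = (M.choose k) * (M - k) := Nat.choose_succ_right_eq M k
  have ha : (0:ℝ) < (M.choose k : ℝ) := by exact_mod_cast Nat.choose_pos (by omega)
  have hb : (0:ℝ) < (M.choose (k+1) : ℝ) := by exact_mod_cast Nat.choose_pos hk
  have hc : (0:ℝ) < ((M-1).choose k : ℝ) := by exact_mod_cast Nat.choose_pos (by omega)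
  have hM : (0:ℝ) < (M:ℝ) := by exact_mod_cast Nat.pos_of_ne_zero (by omega)
  have k1 : (M:ℝ) * ((M-1).choose k) = (M.choose (k+1)) * ((k:ℝ)+1) := by
    exact_mod_cast key1
  have k2 : ((M.choose (k+1)):ℝ) * ((k:ℝ)+1) = (M.choose k) * ((M:ℝ) - k) := by
    have : ((M - k : ℕ):ℝ) = (M:ℝ) - k := by
      rw [Nat.cast_sub (by omega)]
    rw [← this]
    exact_mod_cast key2
  field_simp
  nlinarith [k1, k2, ha, hb, hc, hM]

lemma sum_choose_div (q : ℕ) : ∀ n m : ℕ, m + q ≤ n →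
    ∑ r ∈ Finset.range (q+1), ((q.choose r : ℝ))/((n.choose (m+r)):ℝ) =
      ((n:ℝ)+1)/((((n-q : ℕ)):ℝ)+1) / (((n-q).choose m : ℝ)) := by
  induction q with
  | zero =>
    intro n m h
    simp only [zero_add, Finset.sum_range_one, Nat.choose_self, Nat.cast_one, Nat.sub_zero, add_zero]
    have h1 : ((n:ℝ)+1) ≠ 0 := by positivity
    field_simp
  | succ q IH =>
    intro n m h
    have hq : m + q ≤ n := by omega
    have hq1 : (m+1) + q ≤ n := by omega
    rw [Finset.sum_range_succ']
    have step : ∀ r ∈ Finset.range (q+1),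
        (((q+1).choose (r+1) : ℝ))/((n.choose (m+(r+1))):ℝ) =
        ((q.choose r : ℝ))/((n.choose (m+(r+1))):ℝ) +
        ((q.choose (r+1) : ℝ))/((n.choose (m+(r+1))):ℝ) := by
      intro r hr
      rw [Nat.choose_succ_succ]
      push_cast
      rw [add_div]
    rw [Finset.sum_congr rfl step, Finset.sum_add_distrib]
    have resum : ∑ r ∈ Finset.range (q+1), ((q.choose r : ℝ))/((n.choose (m+(r+1))):ℝ) =
        ∑ r ∈ Finset.range (q+1), ((q.choose r : ℝ))/((n.choose ((m+1)+r)):ℝ) := by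
      apply Finset.sum_congr rfl
      intro r hr
      have e : m+(r+1) = (m+1)+r := by omega
      rw [e]
    rw [resum]
    have shift : ∑ r ∈ Finset.range (q+1), ((q.choose (r+1) : ℝ))/((n.choose (m+(r+1))):ℝ) =
        ∑ r ∈ Finset.range (q+1), ((q.choose r : ℝ))/((n.choose (m+r)):ℝ) -
          ((q.choose 0 : ℝ))/((n.choose (m+0)):ℝ) := by
      rw [Finset.sum_range_succ' (fun r => ((q.choose r : ℝ))/((n.choose (m+r)):ℝ)) q]
      have top : ((q.choose (q+1) : ℝ))/((n.choose (m+(q+1))):ℝ) = 0 := by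
        rw [Nat.choose_succ_self]; simp
      rw [Finset.sum_range_succ, top]
      ring
    rw [shift, IH n (m+1) hq1, IH n m hq]
    simp only [Nat.choose_zero_right, Nat.cast_one, add_zero]
    -- now pure algebra with choose_harmonic
    have hmain := choose_harmonic (n - q) m (by omega)
    have e1 : n - q - 1 = n - (q+1) := by omega
    have e2 : ((n - q : ℕ):ℝ) = ((n - (q+1) : ℕ):ℝ) + 1 := by
      have : (n - q) = (n - (q+1)) + 1 := by omega
      exact_mod_cast this
    rw [e1, e2] at hmain
    have hc1 : (0:ℝ) < ((n-q).choose m : ℝ) := by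
      exact_mod_cast Nat.choose_pos (by omega)
    have hc2 : (0:ℝ) < ((n-q).choose (m+1) : ℝ) := by
      exact_mod_cast Nat.choose_pos (by omega)
    have hc3 : (0:ℝ) < ((n-(q+1)).choose m : ℝ) := by
      exact_mod_cast Nat.choose_pos (by omega)
    have hn1 : (0:ℝ) < (n:ℝ)+1 := by positivity
    have hd : (0:ℝ) < ((n - (q+1) : ℕ):ℝ) + 1 := by positivity
    have hd2 : (0:ℝ) < ((n - q : ℕ):ℝ) + 1 := by positivity
    rw [e2] at hd2
    calc ((n:ℝ)+1)/(((n-q:ℕ):ℝ)+1)/((n-q).choose (m+1) : ℝ) +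
          (((n:ℝ)+1)/(((n-q:ℕ):ℝ)+1)/((n-q).choose m : ℝ) - 1/(n.choose m : ℝ)) +
          1/(n.choose m : ℝ)
        = ((n:ℝ)+1)/(((n-q:ℕ):ℝ)+1) * ((1:ℝ)/((n-q).choose m) + 1/((n-q).choose (m+1))) := by
          ring
      _ = ((n:ℝ)+1)/(((n-q:ℕ):ℝ)+1) *
            (((((n - (q+1) : ℕ):ℝ) + 1)+1)/((((n - (q+1) : ℕ):ℝ) + 1) * ((n-(q+1)).choose m))) := by
          rw [hmain]
      _ = ((n:ℝ)+1)/((((n - (q+1) : ℕ)):ℝ)+1)/(((n-(q+1)).choose m : ℝ)) := by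
          rw [e2]
          field_simp

lemma per_m (N i m : ℕ) (hi : 1 ≤ i) (hiN : i + 1 ≤ N) (hm : m + 1 ≤ i) :
    ((i-1).choose m : ℝ) *
      ((∑ r ∈ Finset.range (N-i), (((N-i-1).choose r : ℝ))/(((N-1).choose (m+r)):ℝ)) +
       (∑ r ∈ Finset.range (N-i), (((N-i-1).choose r : ℝ))/(((N-1).choose ((m+1)+r)):ℝ))) =
    (N : ℝ) / i := by
  have hq1 : N - i = (N - i - 1) + 1 := by omega
  have h1 : m + (N-i-1) ≤ N-1 := by omega
  have h2 : (m+1) + (N-i-1) ≤ N-1 := by omega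
  have e : (N-1) - (N-i-1) = i := by omega
  have s1 := sum_choose_div (N-i-1) (N-1) m h1
  have s2 := sum_choose_div (N-i-1) (N-1) (m+1) h2
  rw [e] at s1 s2
  rw [show Finset.range (N-i) = Finset.range ((N-i-1)+1) from by rw [← hq1], s1, s2]
  have hmain := choose_harmonic i m hm
  have hc1 : (0:ℝ) < ((i).choose m : ℝ) := by exact_mod_cast Nat.choose_pos (by omega)
  have hc2 : (0:ℝ) < ((i).choose (m+1) : ℝ) := by exact_mod_cast Nat.choose_pos (by omega)
  have hc3 : (0:ℝ) < ((i-1).choose m : ℝ) := by exact_mod_cast Nat.choose_pos (by omega)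
  have hN : ((N-1:ℕ):ℝ) + 1 = (N:ℝ) := by
    have : (N-1) + 1 = N := by omega
    exact_mod_cast this
  have hi0 : (0:ℝ) < (i:ℝ) := by exact_mod_cast hi
  calc ((i-1).choose m : ℝ) *
        ((((N-1:ℕ):ℝ)+1)/(((i:ℕ):ℝ)+1)/((i).choose m : ℝ) +
         (((N-1:ℕ):ℝ)+1)/(((i:ℕ):ℝ)+1)/((i).choose (m+1) : ℝ))
      = ((i-1).choose m : ℝ) * ((((N-1:ℕ):ℝ)+1)/(((i:ℕ):ℝ)+1)) *
          ((1:ℝ)/((i).choose m : ℝ) + 1/((i).choose (m+1) : ℝ)) := by ring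
    _ = ((i-1).choose m : ℝ) * ((((N-1:ℕ):ℝ)+1)/(((i:ℕ):ℝ)+1)) *
          (((i:ℝ)+1)/((i:ℝ) * ((i-1).choose m : ℝ))) := by rw [hmain]
    _ = (N : ℝ) / i := by
          rw [hN]
          field_simp

lemma sum_powerset_union (A B : Finset ℕ) (hAB : Disjoint A B) (g : Finset ℕ → ℝ) :
    ∑ T ∈ (A ∪ B).powerset, g T = ∑ U ∈ A.powerset, ∑ V ∈ B.powerset, g (U ∪ V) := by
  classical
  induction A using Finset.induction_on generalizing g with
  | empty => simp
  | insert a A' ha IH =>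
    have haB : a ∉ B := fun h => (Finset.disjoint_left.mp hAB) (Finset.mem_insert_self a A') h
    have hA'B : Disjoint A' B :=
      Finset.disjoint_of_subset_left (Finset.subset_insert a A') hAB
    rw [Finset.insert_union, Finset.sum_powerset_insert (by simp [ha, haB]),
      Finset.sum_powerset_insert ha, IH hA'B g, IH hA'B (fun T => g (insert a T))]
    congr 1
    apply Finset.sum_congr rfl
    intro U hU
    apply Finset.sum_congr rfl
    intro V hV
    rw [Finset.insert_union]

lemma sum_powerset_card (A : Finset ℕ) (F : ℕ → ℝ) :
    ∑ U ∈ A.powerset, F U.card =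
    ∑ m ∈ Finset.range (A.card + 1), (A.card.choose m : ℝ) * F m := by
  rw [Finset.sum_powerset]
  apply Finset.sum_congr rfl
  intro m hm
  rw [Finset.sum_congr rfl (fun U hU => by rw [(Finset.mem_powersetCard.mp hU).2] : 
    ∀ U ∈ Finset.powersetCard m A, F U.card = F m)]
  rw [Finset.sum_const, Finset.card_powersetCard, nsmul_eq_mul]

lemma count_sum (N K i : ℕ) (hi : 1 ≤ i) (hiN : i + 1 ≤ N) (hK : 1 ≤ K) :
    ∑ T ∈ (((Finset.Icc 1 N).erase i).erase (i+1)).powerset,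
      (if (T.filter (· < i)).card < K then
        1/(((N-1).choose T.card : ℝ)) + 1/(((N-1).choose (T.card + 1) : ℝ)) else 0)
    = (N : ℝ) * (min K i) / i := by
  have hQ : ((Finset.Icc 1 N).erase i).erase (i+1) =
      (Finset.Icc 1 (i-1)) ∪ (Finset.Icc (i+2) N) := by
    ext x
    simp only [Finset.mem_erase, Finset.mem_Icc, Finset.mem_union]
    omega
  have hdisj : Disjoint (Finset.Icc 1 (i-1)) (Finset.Icc (i+2) N) := by
    rw [Finset.disjoint_left]
    intro x hx hx'
    rw [Finset.mem_Icc] at hx hx'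
    omega
  have hcardA : (Finset.Icc 1 (i-1)).card = i - 1 := by rw [Nat.card_Icc]; omega
  have hcardB : (Finset.Icc (i+2) N).card = N - i - 1 := by rw [Nat.card_Icc]; omega
  rw [hQ, sum_powerset_union _ _ hdisj]
  have hUV : ∀ U ∈ (Finset.Icc 1 (i-1)).powerset, ∀ V ∈ (Finset.Icc (i+2) N).powerset,
      (if ((U ∪ V).filter (· < i)).card < K then
        1/(((N-1).choose (U ∪ V).card : ℝ)) + 1/(((N-1).choose ((U ∪ V).card + 1) : ℝ)) else 0) =
      (if U.card < K then
        1/(((N-1).choose (U.card + V.card) : ℝ)) + 1/(((N-1).choose ((U.card + V.card) + 1) : ℝ)) else 0) := by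
    intro U hU V hV
    rw [Finset.mem_powerset] at hU hV
    have hfil : (U ∪ V).filter (· < i) = U := by
      rw [Finset.filter_union]
      rw [Finset.filter_true_of_mem (fun x hx => by
        have := Finset.mem_Icc.mp (hU hx); omega)]
      rw [Finset.filter_false_of_mem (fun x hx => by
        have := Finset.mem_Icc.mp (hV hx); omega)]
      rw [Finset.union_empty]
    have hcard : (U ∪ V).card = U.card + V.card := by
      rw [Finset.card_union_of_disjoint]
      exact Finset.disjoint_of_subset_left hU (Finset.disjoint_of_subset_right hV hdisj)
    rw [hfil, hcard]
  rw [Finset.sum_congr rfl (fun U hU => Finset.sum_congr rfl (hUV U hU))]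
  -- inner sums: over V, depends only on V.card
  have inner : ∀ U ∈ (Finset.Icc 1 (i-1)).powerset,
      ∑ V ∈ (Finset.Icc (i+2) N).powerset,
        (if U.card < K then
          1/(((N-1).choose (U.card + V.card) : ℝ)) + 1/(((N-1).choose ((U.card + V.card) + 1) : ℝ)) else 0) =
      (if U.card < K then
        ∑ r ∈ Finset.range (N-i), (((N-i-1).choose r : ℝ)) *
          (1/(((N-1).choose (U.card + r) : ℝ)) + 1/(((N-1).choose ((U.card + r) + 1) : ℝ))) else 0) := by
    intro U hU
    rw [sum_powerset_card (Finset.Icc (i+2) N)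
      (fun v => if U.card < K then
        1/(((N-1).choose (U.card + v) : ℝ)) + 1/(((N-1).choose ((U.card + v) + 1) : ℝ)) else 0)]
    rw [hcardB]
    have : N - i - 1 + 1 = N - i := by omega
    rw [this]
    split_ifs with h
    · rfl
    · simp
  rw [Finset.sum_congr rfl inner]
  rw [sum_powerset_card (Finset.Icc 1 (i-1))
    (fun m => if m < K then
      ∑ r ∈ Finset.range (N-i), (((N-i-1).choose r : ℝ)) *
        (1/(((N-1).choose (m + r) : ℝ)) + 1/(((N-1).choose ((m + r) + 1) : ℝ))) else 0)]
  rw [hcardA]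
  have hrange : i - 1 + 1 = i := by omega
  rw [hrange]
  -- each m < K term equals N/i
  have hterm : ∀ m ∈ Finset.range i,
      ((i-1).choose m : ℝ) * (if m < K then
        ∑ r ∈ Finset.range (N-i), (((N-i-1).choose r : ℝ)) *
          (1/(((N-1).choose (m + r) : ℝ)) + 1/(((N-1).choose ((m + r) + 1) : ℝ))) else 0) =
      (if m < K then (N : ℝ)/i else 0) := by
    intro m hm
    rw [Finset.mem_range] at hm
    split_ifs with h
    · have split : ∑ r ∈ Finset.range (N-i), (((N-i-1).choose r : ℝ)) *
          (1/(((N-1).choose (m + r) : ℝ)) + 1/(((N-1).choose ((m + r) + 1) : ℝ))) =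
          (∑ r ∈ Finset.range (N-i), (((N-i-1).choose r : ℝ))/(((N-1).choose (m+r)):ℝ)) +
          (∑ r ∈ Finset.range (N-i), (((N-i-1).choose r : ℝ))/(((N-1).choose ((m+1)+r)):ℝ)) := by
        rw [← Finset.sum_add_distrib]
        apply Finset.sum_congr rfl
        intro r hr
        have e : (m + r) + 1 = (m+1) + r := by omega
        rw [e]
        ring
      rw [split]
      exact per_m N i m hi hiN (by omega)
    · rw [mul_zero]
  rw [Finset.sum_congr rfl hterm]
  have : ∑ m ∈ Finset.range i, (if m < K then (N : ℝ)/i else 0) =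
      ((min K i : ℕ) : ℝ) * ((N : ℝ)/i) := by
    rw [← Finset.sum_filter]
    have : (Finset.range i).filter (· < K) = Finset.range (min K i) := by
      ext x
      simp only [Finset.mem_filter, Finset.mem_range, lt_min_iff]
      omega
    rw [this, Finset.sum_const, Finset.card_range, nsmul_eq_mul]
  rw [this]
  ring

lemma shapley_diff (N K : ℕ) (y : ℕ → ℕ) (yt : ℕ) (i : ℕ)
    (hi : 1 ≤ i) (hiN : i + 1 ≤ N) (hK : 1 ≤ K) :
    shapley (Finset.Icc 1 N) (knnUtil K y yt) i -
      shapley (Finset.Icc 1 N) (knnUtil K y yt) (i+1) =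
    (ind y yt i - ind y yt (i+1)) * (min K i) / ((K : ℝ) * i) := by
  have hcard : (Finset.Icc 1 N).card = N := by rw [Nat.card_Icc]; omega
  set Q := ((Finset.Icc 1 N).erase i).erase (i+1) with hQdef
  have hiQ : i ∉ Q := fun h => (Finset.notMem_erase i _) (Finset.mem_of_mem_erase h)
  have hi1Q : i + 1 ∉ Q := Finset.notMem_erase _ _
  have hev1 : (Finset.Icc 1 N).erase i = insert (i+1) Q := by
    rw [hQdef, Finset.insert_erase]
    rw [Finset.mem_erase]
    exact ⟨by omega, Finset.mem_Icc.mpr (by omega)⟩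
  have hev2 : (Finset.Icc 1 N).erase (i+1) = insert i Q := by
    rw [hQdef, Finset.erase_right_comm, Finset.insert_erase]
    rw [Finset.mem_erase]
    exact ⟨by omega, Finset.mem_Icc.mpr (by omega)⟩
  rw [shapley, shapley, hcard, hev1, hev2,
    Finset.sum_powerset_insert hi1Q, Finset.sum_powerset_insert hiQ]
  have hTQ : ∀ T ∈ Q.powerset, i ∉ T ∧ i + 1 ∉ T := by
    intro T hT
    rw [Finset.mem_powerset] at hT
    exact ⟨fun h => hiQ (hT h), fun h => hi1Q (hT h)⟩
  have hci : ∀ T ∈ Q.powerset, (insert (i+1) T).card = T.card + 1 := by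
    intro T hT
    exact Finset.card_insert_of_notMem (hTQ T hT).2
  have hci' : ∀ T ∈ Q.powerset, (insert i T).card = T.card + 1 := by
    intro T hT
    exact Finset.card_insert_of_notMem (hTQ T hT).1
  rw [← mul_sub]
  have comb : (∑ T ∈ Q.powerset, (1/((N-1).choose T.card : ℝ)) *
        (knnUtil K y yt (insert i T) - knnUtil K y yt T) +
      ∑ T ∈ Q.powerset, (1/((N-1).choose (insert (i+1) T).card : ℝ)) *
        (knnUtil K y yt (insert i (insert (i+1) T)) - knnUtil K y yt (insert (i+1) T))) -
      (∑ T ∈ Q.powerset, (1/((N-1).choose T.card : ℝ)) *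
        (knnUtil K y yt (insert (i+1) T) - knnUtil K y yt T) +
      ∑ T ∈ Q.powerset, (1/((N-1).choose (insert i T).card : ℝ)) *
        (knnUtil K y yt (insert (i+1) (insert i T)) - knnUtil K y yt (insert i T))) =
      ∑ T ∈ Q.powerset, (1/((N-1).choose T.card : ℝ) + 1/((N-1).choose (T.card+1) : ℝ)) *
        (knnUtil K y yt (insert i T) - knnUtil K y yt (insert (i+1) T)) := by
    rw [← Finset.sum_add_distrib, ← Finset.sum_add_distrib, ← Finset.sum_sub_distrib]
    apply Finset.sum_congr rfl
    intro T hT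
    rw [hci T hT, hci' T hT, Finset.insert_comm]
    ring
  rw [comb]
  have diag : ∀ T ∈ Q.powerset,
      (1/((N-1).choose T.card : ℝ) + 1/((N-1).choose (T.card+1) : ℝ)) *
        (knnUtil K y yt (insert i T) - knnUtil K y yt (insert (i+1) T)) =
      (1/(K:ℝ)) * (ind y yt i - ind y yt (i+1)) *
        (if (T.filter (· < i)).card < K then
          1/((N-1).choose T.card : ℝ) + 1/((N-1).choose (T.card+1) : ℝ) else 0) := by
    intro T hT
    rw [knn_diff K y yt i T (hTQ T hT).1 (hTQ T hT).2]
    split_ifs with h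
    · ring
    · ring
  rw [Finset.sum_congr rfl diag, ← Finset.mul_sum, count_sum N K i hi hiN hK]
  have hK0 : (K:ℝ) ≠ 0 := by positivity
  have hN0 : (N:ℝ) ≠ 0 := by
    have : 0 < N := by omega
    positivity
  have hi0 : (i:ℝ) ≠ 0 := by positivity
  field_simp

lemma shapley_top (N K : ℕ) (y : ℕ → ℕ) (yt : ℕ) (hK : 1 ≤ K) (hKN : K ≤ N) :
    shapley (Finset.Icc 1 N) (knnUtil K y yt) N = ind y yt N / N := by
  have hN : 1 ≤ N := le_trans hK hKN
  have hcard : (Finset.Icc 1 N).card = N := by rw [Nat.card_Icc]; omega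
  have herase : (Finset.Icc 1 N).erase N = Finset.Icc 1 (N-1) := by
    ext x
    simp only [Finset.mem_erase, Finset.mem_Icc]
    omega
  rw [shapley, hcard, herase]
  have hmarg : ∀ S ∈ (Finset.Icc 1 (N-1)).powerset,
      (1/((N-1).choose S.card : ℝ)) * (knnUtil K y yt (insert N S) - knnUtil K y yt S) =
      (1/((N-1).choose S.card : ℝ)) * ((1/(K:ℝ)) * (if S.card < K then ind y yt N else 0)) := by
    intro S hS
    rw [Finset.mem_powerset] at hS
    rw [knn_top K y yt N S (fun x hx => by have := Finset.mem_Icc.mp (hS hx); omega)]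
  rw [Finset.sum_congr rfl hmarg]
  rw [sum_powerset_card (Finset.Icc 1 (N-1))
    (fun s => (1/((N-1).choose s : ℝ)) * ((1/(K:ℝ)) * (if s < K then ind y yt N else 0)))]
  have hcardI : (Finset.Icc 1 (N-1)).card = N - 1 := by rw [Nat.card_Icc]; omega
  rw [hcardI]
  have hterm : ∀ m ∈ Finset.range (N-1+1),
      ((N-1).choose m : ℝ) * ((1/((N-1).choose m : ℝ)) * ((1/(K:ℝ)) * (if m < K then ind y yt N else 0))) =
      (if m < K then (1/(K:ℝ)) * ind y yt N else 0) := by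
    intro m hm
    rw [Finset.mem_range] at hm
    split_ifs with h
    · have hc : ((N-1).choose m : ℝ) ≠ 0 := by
        have : 0 < (N-1).choose m := Nat.choose_pos (by omega)
        positivity
      field_simp
    · ring
  rw [Finset.sum_congr rfl hterm, ← Finset.sum_filter]
  have : (Finset.range (N-1+1)).filter (· < K) = Finset.range K := by
    ext x
    simp only [Finset.mem_filter, Finset.mem_range]
    omega
  rw [this, Finset.sum_const, Finset.card_range, nsmul_eq_mul]
  have hK0 : (K:ℝ) ≠ 0 := by positivity
  have hN0 : (N:ℝ) ≠ 0 := by positivity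
  field_simp

/-- Closed form for the Shapley values of the unweighted K-NN classifier. -/
theorem knn_shapley_closed_form (N K : ℕ) (hK1 : 1 ≤ K) (hKN : K ≤ N)
    (y : ℕ → ℕ) (ytest : ℕ) :
    (∀ i, K ≤ i → i ≤ N →
      shapley (Finset.Icc 1 N) (knnUtil K y ytest) i =
        (if y i = ytest then (1 : ℝ) else 0) / i -
          ∑ j ∈ Finset.Icc (i + 1) N,
            (if y j = ytest then (1 : ℝ) else 0) / ((j : ℝ) * ((j : ℝ) - 1))) ∧
    (∀ i, 1 ≤ i → i ≤ K - 1 →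
      shapley (Finset.Icc 1 N) (knnUtil K y ytest) i =
        (if y i = ytest then (1 : ℝ) else 0) / K -
          ∑ j ∈ Finset.Icc (K + 1) N,
            (if y j = ytest then (1 : ℝ) else 0) / ((j : ℝ) * ((j : ℝ) - 1))) := by
  have aux1 : ∀ d : ℕ, ∀ i : ℕ, K ≤ i → i + d = N →
      shapley (Finset.Icc 1 N) (knnUtil K y ytest) i =
        ind y ytest i / i -
          ∑ j ∈ Finset.Icc (i + 1) N, ind y ytest j / ((j : ℝ) * ((j : ℝ) - 1)) := by
    intro d
    induction d with
    | zero =>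
      intro i hKi hiN
      have hiN' : i = N := by omega
      subst hiN'
      rw [shapley_top i K y ytest hK1 hKN]
      have : Finset.Icc (i + 1) i = ∅ := by
        apply Finset.Icc_eq_empty
        omega
      rw [this, Finset.sum_empty, sub_zero]
    | succ d IH =>
      intro i hKi hiN
      have hi1 : 1 ≤ i := le_trans hK1 hKi
      have hi1N : i + 1 ≤ N := by omega
      have hdiff := shapley_diff N K y ytest i hi1 hi1N hK1
      have hmin : min K i = K := min_eq_left hKi
      rw [hmin] at hdiff
      have hIH := IH (i+1) (by omega) (by omega)
      have hsplit : Finset.Icc (i + 1) N = insert (i+1) (Finset.Icc (i + 2) N) := by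
        ext x
        simp only [Finset.mem_insert, Finset.mem_Icc]
        omega
      have hnotmem : i + 1 ∉ Finset.Icc (i + 2) N := by
        rw [Finset.mem_Icc]; omega
      have hK0 : (K:ℝ) ≠ 0 := by positivity
      have hi0 : (i:ℝ) ≠ 0 := by
        have : 0 < i := hi1
        positivity
      have hii : ((i:ℝ) + 1) ≠ 0 := by positivity
      have e1 : shapley (Finset.Icc 1 N) (knnUtil K y ytest) i =
          shapley (Finset.Icc 1 N) (knnUtil K y ytest) (i+1) +
          (ind y ytest i - ind y ytest (i+1)) * K / ((K:ℝ) * i) := by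
        linarith [hdiff]
      rw [e1, hIH, hsplit, Finset.sum_insert hnotmem]
      have hcast : ((i+1 : ℕ) : ℝ) = (i:ℝ) + 1 := by push_cast; ring
      rw [hcast]
      field_simp
      ring_nf
      rw [mul_comm (i:ℝ) (ind y ytest (1 + i)), mul_inv_cancel_right₀ hi0]
      ring
  have aux2 : ∀ d : ℕ, ∀ i : ℕ, 1 ≤ i → i + d = K →
      shapley (Finset.Icc 1 N) (knnUtil K y ytest) i =
        ind y ytest i / K -
          ∑ j ∈ Finset.Icc (K + 1) N, ind y ytest j / ((j : ℝ) * ((j : ℝ) - 1)) := by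
    intro d
    induction d with
    | zero =>
      intro i hi1 hiK
      have : i = K := by omega
      subst this
      exact aux1 (N - i) i le_rfl (by omega)
    | succ d IH =>
      intro i hi1 hiK
      have hiK' : i + 1 ≤ K := by omega
      have hi1N : i + 1 ≤ N := by omega
      have hdiff := shapley_diff N K y ytest i hi1 hi1N hK1
      have hmin : min K i = i := min_eq_right (by omega)
      rw [hmin] at hdiff
      have hIH := IH (i+1) (by omega) (by omega)
      have hK0 : (K:ℝ) ≠ 0 := by positivity
      have hi0 : (i:ℝ) ≠ 0 := by
        have : 0 < i := hi1
        positivity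
      have e1 : shapley (Finset.Icc 1 N) (knnUtil K y ytest) i =
          shapley (Finset.Icc 1 N) (knnUtil K y ytest) (i+1) +
          (ind y ytest i - ind y ytest (i+1)) * i / ((K:ℝ) * i) := by
        linarith [hdiff]
      rw [e1, hIH]
      field_simp
      ring
  constructor
  · intro i hKi hiN
    have := aux1 (N - i) i hKi (by omega)
    simpa [ind] using this
  · intro i hi1 hiK
    have := aux2 (K - i) i hi1 (by omega)
    simpa [ind] using this
end

section
/- Under the unweighted K-NN classification utility with sorted training points, the Shapley values satisfy |s_i| ≤ min(1/i, 1/K) for every 1 ≤ i ≤ N. -/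
open Finset

lemma choose_inv_rec (m k : ℕ) (hk : k ≤ m) :
    (1:ℝ)/((m+1).choose k) + 1/((m+1).choose (k+1)) = ((m+2)/(m+1)) * (1/(m.choose k)) := by
  have h1 : (m+1) * m.choose k = (m+1).choose (k+1) * (k+1) := Nat.add_one_mul_choose_eq m k
  have h2 : (m+1).choose k * (m + 1 - k) = (m+1) * m.choose k := by
    have := Nat.add_one_mul_choose_eq m (m - k)
    rw [Nat.choose_symm hk] at this
    have hs : m - k + 1 = m + 1 - k := by omega
    rw [hs] at this
    have hsym : (m+1).choose (m + 1 - k) = (m+1).choose k :=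
      Nat.choose_symm (by omega : k ≤ m+1)
    rw [hsym] at this
    omega
  have ha : (0:ℝ) < m.choose k := by exact_mod_cast Nat.choose_pos hk
  have hb : (0:ℝ) < (m+1).choose k := by exact_mod_cast Nat.choose_pos (by omega : k ≤ m+1)
  have hc : (0:ℝ) < (m+1).choose (k+1) := by exact_mod_cast Nat.choose_pos (by omega : k+1 ≤ m+1)
  have h1' : ((m:ℝ)+1) * m.choose k = (m+1).choose (k+1) * (k+1) := by exact_mod_cast h1
  have h2' : ((m+1).choose k : ℝ) * ((m:ℝ) + 1 - k) = ((m:ℝ)+1) * m.choose k := by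
    have : ((m+1).choose k * (m + 1 - k) : ℕ) = ((m+1) * m.choose k : ℕ) := h2
    have hcast : ((m + 1 - k : ℕ) : ℝ) = (m:ℝ) + 1 - k := by
      push_cast [Nat.cast_sub (by omega : k ≤ m+1)]; ring
    calc ((m+1).choose k : ℝ) * ((m:ℝ) + 1 - k) = (((m+1).choose k * (m + 1 - k) : ℕ) : ℝ) := by
          push_cast [hcast]; ring
      _ = ((m:ℝ)+1) * m.choose k := by exact_mod_cast this
  field_simp
  nlinarith [h1', h2', ha, hb, hc]

lemma key_identity (a j : ℕ) (hj : j ≤ a) (b : ℕ) :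
    ∑ t ∈ Finset.range (b+1), ((b.choose t : ℝ) / ((a+b).choose (j+t))) =
      ((a:ℝ)+b+1) / (((a:ℝ)+1) * (a.choose j)) := by
  induction b with
  | zero =>
    have : (0:ℝ) < a.choose j := by exact_mod_cast Nat.choose_pos hj
    simp only [Nat.add_zero, Nat.zero_add, Finset.sum_range_one, Nat.choose_self, Nat.choose_zero_right]
    push_cast
    field_simp
    ring
  | succ b ih =>
    have hD : ∀ t, (a+(b+1)).choose t = ((a+b)+1).choose t := fun t => rfl
    have hA : ∑ x ∈ Finset.range (b+1), (((b+1).choose (x+1) : ℝ)/(((a+b)+1).choose (j+(x+1))))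
        = ∑ x ∈ Finset.range (b+1), ((b.choose x : ℝ)/(((a+b)+1).choose ((j+x)+1)))
          + ∑ x ∈ Finset.range (b+1), ((b.choose (x+1) : ℝ)/(((a+b)+1).choose ((j+x)+1))) := by
      rw [← Finset.sum_add_distrib]
      apply Finset.sum_congr rfl; intro x _
      have hc : ((b+1).choose (x+1) : ℝ) = b.choose x + b.choose (x+1) := by
        exact_mod_cast Nat.choose_succ_succ' b x
      rw [show j+(x+1) = (j+x)+1 from by omega, hc, add_div]
    have hB : ∑ x ∈ Finset.range (b+1), ((b.choose (x+1) : ℝ)/(((a+b)+1).choose ((j+x)+1)))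
          + 1/(((a+b)+1).choose j)
        = ∑ x ∈ Finset.range (b+1), ((b.choose x : ℝ)/(((a+b)+1).choose (j+x))) := by
      rw [Finset.sum_range_succ
        (f := fun x => ((b.choose (x+1) : ℝ)/(((a+b)+1).choose ((j+x)+1))))]
      rw [Finset.sum_range_succ' (f := fun x => ((b.choose x : ℝ)/(((a+b)+1).choose (j+x))))]
      simp [Nat.choose_succ_self, add_assoc]
    have e1 : ∑ t ∈ Finset.range (b+2), (((b+1).choose t : ℝ) / ((a+(b+1)).choose (j+t)))
        = ∑ t ∈ Finset.range (b+1), ((b.choose t : ℝ) *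
            (1/(((a+b)+1).choose (j+t)) + 1/(((a+b)+1).choose ((j+t)+1)))) := by
      rw [Finset.sum_range_succ'
        (f := fun t => (((b+1).choose t : ℝ) / ((a+(b+1)).choose (j+t))))]
      simp only [hD]
      rw [hA]
      have : ∑ t ∈ Finset.range (b+1), ((b.choose t : ℝ) *
            (1/(((a+b)+1).choose (j+t)) + 1/(((a+b)+1).choose ((j+t)+1))))
          = ∑ x ∈ Finset.range (b+1), ((b.choose x : ℝ)/(((a+b)+1).choose (j+x)))
          + ∑ x ∈ Finset.range (b+1), ((b.choose x : ℝ)/(((a+b)+1).choose ((j+x)+1))) := by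
        rw [← Finset.sum_add_distrib]
        apply Finset.sum_congr rfl; intro x _
        rw [mul_add, mul_one_div, mul_one_div]
      rw [this, ← hB]
      simp only [Nat.choose_zero_right, Nat.cast_one, Nat.add_zero]
      ring
    have hab : (0:ℝ) < (a:ℝ) + b + 1 := by positivity
    calc ∑ t ∈ Finset.range (b+1+1), (((b+1).choose t : ℝ) / ((a+(b+1)).choose (j+t)))
        = ∑ t ∈ Finset.range (b+1), ((b.choose t : ℝ) *
            ((((a:ℝ)+b+2)/((a:ℝ)+b+1)) * (1/((a+b).choose (j+t))))) := by
          rw [show b+1+1 = b+2 from rfl, e1]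
          apply Finset.sum_congr rfl; intro t ht
          have ht' : t ≤ b := by simpa [Nat.lt_succ_iff] using Finset.mem_range.1 ht
          rw [choose_inv_rec (a+b) (j+t) (by omega)]
          push_cast; ring_nf
      _ = (((a:ℝ)+b+2)/((a:ℝ)+b+1)) * ∑ t ∈ Finset.range (b+1),
            ((b.choose t : ℝ) / ((a+b).choose (j+t))) := by
          rw [Finset.mul_sum]; apply Finset.sum_congr rfl; intro t _; rw [mul_one_div]; ring
      _ = (((a:ℝ)+b+2)/((a:ℝ)+b+1)) * (((a:ℝ)+b+1) / (((a:ℝ)+1) * (a.choose j))) := by rw [ih]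
      _ = ((a:ℝ)+(b+1)+1) / (((a:ℝ)+1) * (a.choose j)) := by
          push_cast; field_simp; ring
    push_cast
    ring

lemma sum_sorted_take (g : ℕ → ℝ) :
    ∀ (l : List ℕ), l.Pairwise (· < ·) → ∀ K : ℕ,
      ∑ k ∈ Finset.range (min K l.length), g (l.getD k 0) =
      ∑ x ∈ l.toFinset.filter (fun x => (l.toFinset.filter (· < x)).card < K), g x := by
  intro l
  induction l with
  | nil => intro _ K; simp
  | cons a t ih =>
    intro hs K
    have hst : t.Pairwise (· < ·) := hs.of_cons
    have ha : ∀ x ∈ t, a < x := fun x hx => List.rel_of_pairwise_cons hs hx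
    have haF : a ∉ t.toFinset := fun h => lt_irrefl a (ha a (List.mem_toFinset.1 h))
    cases K with
    | zero => simp
    | succ K =>
      have hlen : (a :: t).length = t.length + 1 := rfl
      have hmin : min (K+1) (t.length + 1) = min K t.length + 1 := Nat.succ_min_succ K t.length
      have hLHS : ∑ k ∈ Finset.range (min (K+1) (a :: t).length), g ((a :: t).getD k 0)
          = (∑ k ∈ Finset.range (min K t.length), g (t.getD k 0)) + g a := by
        rw [hlen, hmin, Finset.sum_range_succ' (f := fun k => g ((a :: t).getD k 0))]
        simp [List.getD_cons_succ, List.getD_cons_zero]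
      rw [hLHS, ih hst K]
      -- now handle RHS
      have htoF : (a :: t).toFinset = insert a t.toFinset := List.toFinset_cons
      set F := t.toFinset with hF
      have hfa : (insert a F).filter (· < a) = ∅ := by
        apply Finset.filter_eq_empty_iff.2
        intro x hx
        rcases Finset.mem_insert.1 hx with rfl | hx
        · exact lt_irrefl x
        · exact fun h => absurd (ha x (List.mem_toFinset.1 hx)) (lt_asymm h)
      have hfx : ∀ x ∈ F, (insert a F).filter (· < x) = insert a (F.filter (· < x)) := by
        intro x hx
        rw [Finset.filter_insert, if_pos (ha x (List.mem_toFinset.1 hx))]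
      have hcard : ∀ x ∈ F, ((insert a F).filter (· < x)).card = (F.filter (· < x)).card + 1 := by
        intro x hx
        rw [hfx x hx, Finset.card_insert_of_notMem (fun h => haF (Finset.mem_filter.1 h).1)]
      have hfilter : (a :: t).toFinset.filter
            (fun x => ((a :: t).toFinset.filter (· < x)).card < K+1)
          = insert a (F.filter (fun x => (F.filter (· < x)).card < K)) := by
        rw [htoF, Finset.filter_insert, if_pos (by rw [hfa]; simp)]
        congr 1
        apply Finset.filter_congr
        intro x hx
        rw [hcard x hx]
        simp [Nat.succ_lt_succ_iff]
      rw [hfilter, Finset.sum_insert (fun h => haF (Finset.mem_filter.1 h).1)]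
      ring

lemma marginal_bound (K : ℕ) (ind : ℕ → ℝ) (h0 : ∀ x, 0 ≤ ind x) (h1 : ∀ x, ind x ≤ 1)
    (i : ℕ) (S : Finset ℕ) (hi : i ∉ S) :
    |(∑ x ∈ (insert i S).filter (fun x => ((insert i S).filter (· < x)).card < K), ind x) -
      ∑ x ∈ S.filter (fun x => (S.filter (· < x)).card < K), ind x| ≤
    (if (S.filter (· < i)).card < K then 1 else 0) := by
  set T := insert i S with hT
  set p := (S.filter (· < i)).card with hp
  have hfi : T.filter (· < i) = S.filter (· < i) := by
    rw [hT, Finset.filter_insert, if_neg (lt_irrefl i)]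
  have hrx : ∀ x ∈ S, (T.filter (· < x)).card
      = (S.filter (· < x)).card + (if i < x then 1 else 0) := by
    intro x hx
    rw [hT, Finset.filter_insert]
    split
    · rw [Finset.card_insert_of_notMem (fun h => hi (Finset.mem_filter.1 h).1)]
    · simp
  set A := S.filter (fun x => (T.filter (· < x)).card < K) with hA
  set B := S.filter (fun x => (S.filter (· < x)).card < K) with hB
  have hiA : i ∉ A := fun h => hi (Finset.mem_filter.1 h).1
  have hTsplit : T.filter (fun x => (T.filter (· < x)).card < K)
      = if p < K then insert i A else A := by
    rw [hT, Finset.filter_insert, ← hT, hfi, ← hp, ← hA]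
  have hAB : A ⊆ B := by
    intro x hx
    rcases Finset.mem_filter.1 hx with ⟨hxS, hxlt⟩
    exact Finset.mem_filter.2 ⟨hxS, lt_of_le_of_lt (by rw [hrx x hxS]; omega) hxlt⟩
  have hsum : (∑ x ∈ B \ A, ind x) + ∑ x ∈ A, ind x = ∑ x ∈ B, ind x :=
    Finset.sum_sdiff hAB
  have hmono : ∀ x x', x ∈ S → x' ∈ S → x < x' →
      (S.filter (· < x)).card < (S.filter (· < x')).card := by
    intro x x' hx hx' hlt
    apply Finset.card_lt_card
    constructor
    · exact Finset.monotone_filter_right S (fun z _ hz => lt_trans hz hlt)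
    · intro hsub
      have : x ∈ S.filter (· < x) := hsub (Finset.mem_filter.2 ⟨hx, hlt⟩)
      exact lt_irrefl x (Finset.mem_filter.1 this).2
  have hmem : ∀ x ∈ B \ A, x ∈ S ∧ i < x ∧ (S.filter (· < x)).card + 1 = K := by
    intro x hx
    rcases Finset.mem_sdiff.1 hx with ⟨hxB, hxA⟩
    rcases Finset.mem_filter.1 hxB with ⟨hxS, hxlt⟩
    have hnot : ¬ (T.filter (· < x)).card < K := fun h => hxA (Finset.mem_filter.2 ⟨hxS, h⟩)
    rw [hrx x hxS] at hnot
    by_cases hix : i < x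
    · rw [if_pos hix] at hnot; exact ⟨hxS, hix, by omega⟩
    · rw [if_neg hix] at hnot; omega
  have hcard1 : (B \ A).card ≤ 1 := by
    apply Finset.card_le_one.2
    intro x hx x' hx'
    rcases hmem x hx with ⟨hxS, _, hxK⟩
    rcases hmem x' hx' with ⟨hx'S, _, hx'K⟩
    by_contra hne
    rcases lt_or_gt_of_ne hne with h | h
    · have := hmono x x' hxS hx'S h; omega
    · have := hmono x' x hx'S hxS h; omega
  have hDnn : 0 ≤ ∑ x ∈ B \ A, ind x := Finset.sum_nonneg (fun x _ => h0 x)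
  have hDle : ∑ x ∈ B \ A, ind x ≤ 1 := by
    calc ∑ x ∈ B \ A, ind x ≤ ∑ _x ∈ B \ A, (1:ℝ) := Finset.sum_le_sum (fun x _ => h1 x)
      _ = (B \ A).card := by simp
      _ ≤ 1 := by exact_mod_cast hcard1
  by_cases hpK : p < K
  · rw [hTsplit, if_pos hpK, Finset.sum_insert hiA, if_pos hpK]
    have := h0 i; have := h1 i
    rw [abs_le]
    constructor <;> linarith
  · have hempty : B \ A = ∅ := by
      apply Finset.eq_empty_of_forall_notMem
      intro x hx
      rcases hmem x hx with ⟨hxS, hix, hxK⟩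
      have hsub : S.filter (· < i) ⊆ S.filter (· < x) :=
        Finset.monotone_filter_right S (fun z _ hz => lt_trans hz hix)
      have := Finset.card_le_card hsub
      omega
    rw [hempty, Finset.sum_empty] at hsum
    rw [hTsplit, if_neg hpK, if_neg hpK, ← hsum]
    simp

lemma sum_powerset_union_s4 {M : Type*} [AddCommMonoid M] (A B : Finset ℕ) (h : Disjoint A B)
    (f : Finset ℕ → M) :
    ∑ S ∈ (A ∪ B).powerset, f S = ∑ S₁ ∈ A.powerset, ∑ S₂ ∈ B.powerset, f (S₁ ∪ S₂) := by
  rw [← Finset.sum_product']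
  apply Finset.sum_nbij' (i := fun S => (S ∩ A, S ∩ B)) (j := fun p => p.1 ∪ p.2)
  · intro S hS
    simp only [Finset.mem_product, Finset.mem_powerset]
    exact ⟨Finset.inter_subset_right, Finset.inter_subset_right⟩
  · intro p hp
    simp only [Finset.mem_product, Finset.mem_powerset] at hp
    exact Finset.mem_powerset.2 (Finset.union_subset_union hp.1 hp.2)
  · intro S hS
    have hS' := Finset.mem_powerset.1 hS
    simp only
    rw [← Finset.inter_union_distrib_left, Finset.inter_eq_left.2 hS']
  · intro p hp
    simp only [Finset.mem_product, Finset.mem_powerset] at hp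
    have h1 : (p.1 ∪ p.2) ∩ A = p.1 := by
      rw [Finset.union_inter_distrib_right, Finset.inter_eq_left.2 hp.1,
        Finset.disjoint_iff_inter_eq_empty.1 (Finset.disjoint_of_subset_left hp.2 h.symm),
        Finset.union_empty]
    have h2 : (p.1 ∪ p.2) ∩ B = p.2 := by
      rw [Finset.union_inter_distrib_right, Finset.inter_eq_left.2 hp.2,
        Finset.disjoint_iff_inter_eq_empty.1 (Finset.disjoint_of_subset_left hp.1 h),
        Finset.empty_union]
    simp [h1, h2]
  · intro S hS
    have hS' := Finset.mem_powerset.1 hS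
    rw [← Finset.inter_union_distrib_left, Finset.inter_eq_left.2 hS']

lemma sum_powerset_inv_choose (E : Finset ℕ) :
    ∑ S ∈ E.powerset, (1:ℝ)/(E.card.choose S.card) = (E.card : ℝ) + 1 := by
  rw [Finset.sum_powerset]
  have : ∀ j ∈ Finset.range (E.card + 1),
      ∑ S ∈ Finset.powersetCard j E, (1:ℝ)/(E.card.choose S.card) = 1 := by
    intro j hj
    have hj' : j ≤ E.card := by simpa [Nat.lt_succ_iff] using Finset.mem_range.1 hj
    rw [Finset.sum_powersetCard j E (fun c => (1:ℝ)/(E.card.choose c))]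
    have hpos : (0:ℝ) < E.card.choose j := by exact_mod_cast Nat.choose_pos hj'
    rw [nsmul_eq_mul]
    field_simp
  rw [Finset.sum_congr rfl this]
  simp

lemma sum_powerset_inner (a j b : ℕ) (hj : j ≤ a) (R : Finset ℕ) (hR : R.card = b) :
    ∑ S₂ ∈ R.powerset, (1:ℝ)/((a+b).choose (j + S₂.card)) =
      ((a:ℝ)+b+1) / (((a:ℝ)+1) * (a.choose j)) := by
  rw [Finset.sum_powerset, hR]
  have : ∀ t ∈ Finset.range (b + 1),
      ∑ S ∈ Finset.powersetCard t R, (1:ℝ)/((a+b).choose (j + S.card))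
        = (b.choose t : ℝ) / ((a+b).choose (j+t)) := by
    intro t ht
    rw [Finset.sum_powersetCard t R (fun c => (1:ℝ)/((a+b).choose (j + c))), hR,
      nsmul_eq_mul, mul_one_div]
  rw [Finset.sum_congr rfl this, key_identity a j hj b]

/-- Bound on the Shapley values of the unweighted K-NN classifier:
`|s_i| ≤ min(1/i, 1/K)` for every `1 ≤ i ≤ N`. -/
theorem knn_shapley_bound (N K : ℕ) (hK1 : 1 ≤ K) (hKN : K ≤ N)
    (y : ℕ → ℕ) (ytest : ℕ) :
    ∀ i, 1 ≤ i → i ≤ N →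
      |shapley (Finset.Icc 1 N) (knnUtil K y ytest) i| ≤
        min (1 / (i : ℝ)) (1 / (K : ℝ)) := by
  intro i hi1 hiN
  have hN0 : 0 < N := lt_of_lt_of_le hK1 hKN
  have hi0 : 0 < i := hi1
  have hNr : (0:ℝ) < N := by exact_mod_cast hN0
  have hKr : (0:ℝ) < K := by exact_mod_cast hK1
  have hir : (0:ℝ) < i := by exact_mod_cast hi0
  have hiP : i ∈ Finset.Icc 1 N := Finset.mem_Icc.2 ⟨hi1, hiN⟩
  have hPcard : (Finset.Icc 1 N).card = N := by rw [Nat.card_Icc]; omega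
  set E := (Finset.Icc 1 N).erase i with hE
  have hEcard : E.card = N - 1 := by rw [hE, Finset.card_erase_of_mem hiP, hPcard]
  set ind : ℕ → ℝ := fun x => if y x = ytest then 1 else 0 with hind
  have hind0 : ∀ x, 0 ≤ ind x := by intro x; rw [hind]; dsimp only; split <;> norm_num
  have hind1 : ∀ x, ind x ≤ 1 := by intro x; rw [hind]; dsimp only; split <;> norm_num
  have hknn : ∀ S : Finset ℕ, knnUtil K y ytest S
      = (1/(K:ℝ)) * ∑ x ∈ S.filter (fun x => (S.filter (· < x)).card < K), ind x := by
    intro S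
    unfold knnUtil
    congr 1
    have h := sum_sorted_take ind (S.sort (· ≤ ·)) (Finset.sortedLT_sort S).pairwise K
    rw [Finset.sort_toFinset, Finset.length_sort] at h
    exact h
  -- the weight and indicator
  have hw0 : ∀ c : ℕ, (0:ℝ) ≤ 1/((N-1).choose c) := by intro c; positivity
  -- main absolute-value estimate
  have hshap : shapley (Finset.Icc 1 N) (knnUtil K y ytest) i
      = (1/(N:ℝ)) * ∑ S ∈ E.powerset, (1/(((N-1).choose S.card):ℝ)) *
          (knnUtil K y ytest (insert i S) - knnUtil K y ytest S) := by
    unfold shapley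
    rw [hPcard]
  have habs : ∀ S ∈ E.powerset,
      |(1/(((N-1).choose S.card):ℝ)) *
          (knnUtil K y ytest (insert i S) - knnUtil K y ytest S)|
      ≤ (1/(((N-1).choose S.card):ℝ)) *
          ((1/(K:ℝ)) * (if (S.filter (· < i)).card < K then 1 else 0)) := by
    intro S hS
    have hiS : i ∉ S := fun h =>
      (Finset.mem_erase.1 (Finset.mem_powerset.1 hS h)).1 rfl
    have hm := marginal_bound K ind hind0 hind1 i S hiS
    rw [hknn, hknn]
    rw [show (1/(K:ℝ)) * (∑ x ∈ (insert i S).filter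
          (fun x => ((insert i S).filter (· < x)).card < K), ind x)
        - (1/(K:ℝ)) * (∑ x ∈ S.filter (fun x => (S.filter (· < x)).card < K), ind x)
      = (1/(K:ℝ)) * ((∑ x ∈ (insert i S).filter
          (fun x => ((insert i S).filter (· < x)).card < K), ind x)
        - ∑ x ∈ S.filter (fun x => (S.filter (· < x)).card < K), ind x) from by ring]
    rw [abs_mul, abs_mul, abs_of_nonneg (hw0 S.card),
      abs_of_nonneg (by positivity : (0:ℝ) ≤ 1/(K:ℝ))]
    exact mul_le_mul_of_nonneg_left
      (mul_le_mul_of_nonneg_left hm (by positivity)) (hw0 S.card)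
  have hbound : |shapley (Finset.Icc 1 N) (knnUtil K y ytest) i|
      ≤ (1/(N:ℝ)) * ((1/(K:ℝ)) * ∑ S ∈ E.powerset, (1/(((N-1).choose S.card):ℝ)) *
          (if (S.filter (· < i)).card < K then 1 else 0)) := by
    rw [hshap, abs_mul, abs_of_nonneg (by positivity : (0:ℝ) ≤ 1/(N:ℝ))]
    apply mul_le_mul_of_nonneg_left _ (by positivity : (0:ℝ) ≤ 1/(N:ℝ))
    calc |∑ S ∈ E.powerset, (1/(((N-1).choose S.card):ℝ)) *
          (knnUtil K y ytest (insert i S) - knnUtil K y ytest S)|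
        ≤ ∑ S ∈ E.powerset, |(1/(((N-1).choose S.card):ℝ)) *
          (knnUtil K y ytest (insert i S) - knnUtil K y ytest S)| :=
          Finset.abs_sum_le_sum_abs _ _
      _ ≤ ∑ S ∈ E.powerset, (1/(((N-1).choose S.card):ℝ)) *
          ((1/(K:ℝ)) * (if (S.filter (· < i)).card < K then 1 else 0)) :=
          Finset.sum_le_sum habs
      _ = (1/(K:ℝ)) * ∑ S ∈ E.powerset, (1/(((N-1).choose S.card):ℝ)) *
          (if (S.filter (· < i)).card < K then 1 else 0) := by
          rw [Finset.mul_sum]; apply Finset.sum_congr rfl; intro S _; ring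
  set W := ∑ S ∈ E.powerset, (1/(((N-1).choose S.card):ℝ)) *
          (if (S.filter (· < i)).card < K then 1 else 0) with hW
  -- claim 1 : W ≤ N
  have hW1 : W ≤ (N:ℝ) := by
    rw [hW]
    calc ∑ S ∈ E.powerset, (1/(((N-1).choose S.card):ℝ)) *
          (if (S.filter (· < i)).card < K then 1 else 0)
        ≤ ∑ S ∈ E.powerset, (1/(((N-1).choose S.card):ℝ)) := by
          apply Finset.sum_le_sum
          intro S _
          apply mul_le_of_le_one_right (hw0 _)
          split <;> norm_num
      _ = ((N-1:ℕ):ℝ) + 1 := by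
          have h := sum_powerset_inv_choose E
          rw [hEcard] at h
          exact h
      _ = (N:ℝ) := by exact_mod_cast (show (N-1)+1 = N by omega)
  -- claim 2 : W ≤ K * (N/i)
  have hQR : E = Finset.Icc 1 (i-1) ∪ Finset.Icc (i+1) N := by
    ext x
    simp only [hE, Finset.mem_erase, Finset.mem_Icc, Finset.mem_union]
    omega
  have hdisj : Disjoint (Finset.Icc 1 (i-1)) (Finset.Icc (i+1) N) := by
    rw [Finset.disjoint_left]
    intro x hx hx'
    simp only [Finset.mem_Icc] at hx hx'
    omega
  have hQcard : (Finset.Icc 1 (i-1)).card = i - 1 := by rw [Nat.card_Icc]; omega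
  have hRcard : (Finset.Icc (i+1) N).card = N - i := by rw [Nat.card_Icc]; omega
  have hab : (i-1) + (N-i) = N - 1 := by omega
  have hWsplit : W = ∑ S₁ ∈ (Finset.Icc 1 (i-1)).powerset,
      (if S₁.card < K then (1:ℝ) else 0) *
        ((N:ℝ)/((i:ℝ) * (((i-1).choose S₁.card):ℝ))) := by
    rw [hW, hQR, sum_powerset_union_s4 _ _ hdisj]
    apply Finset.sum_congr rfl
    intro S₁ hS₁
    have hS₁' : S₁ ⊆ Finset.Icc 1 (i-1) := Finset.mem_powerset.1 hS₁
    have hj : S₁.card ≤ i - 1 := hQcard ▸ Finset.card_le_card hS₁'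
    have hstep : ∀ S₂ ∈ (Finset.Icc (i+1) N).powerset,
        (1/(((N-1).choose (S₁ ∪ S₂).card):ℝ)) *
          (if ((S₁ ∪ S₂).filter (· < i)).card < K then (1:ℝ) else 0)
        = (if S₁.card < K then (1:ℝ) else 0) *
          (1/(((i-1 + (N-i)).choose (S₁.card + S₂.card)):ℝ)) := by
      intro S₂ hS₂
      have hS₂' : S₂ ⊆ Finset.Icc (i+1) N := Finset.mem_powerset.1 hS₂
      have hdisj' : Disjoint S₁ S₂ := hdisj.mono hS₁' hS₂'
      have hc : (S₁ ∪ S₂).card = S₁.card + S₂.card := Finset.card_union_of_disjoint hdisj'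
      have hf1 : S₁.filter (· < i) = S₁ := by
        apply (Finset.filter_eq_self).2
        intro x hx
        have := Finset.mem_Icc.1 (hS₁' hx)
        omega
      have hf2 : S₂.filter (· < i) = ∅ := by
        apply Finset.filter_eq_empty_iff.2
        intro x hx
        have := Finset.mem_Icc.1 (hS₂' hx)
        omega
      have hfil : ((S₁ ∪ S₂).filter (· < i)).card = S₁.card := by
        rw [Finset.filter_union, hf1, hf2, Finset.union_empty]
      rw [hc, hfil, hab, mul_comm]
    rw [Finset.sum_congr rfl hstep]
    rw [← Finset.mul_sum]
    congr 1
    have h := sum_powerset_inner (i-1) S₁.card (N-i) hj (Finset.Icc (i+1) N) hRcard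
    rw [h]
    have c1 : ((i-1:ℕ):ℝ) + ((N-i:ℕ):ℝ) + 1 = (N:ℝ) := by
      exact_mod_cast (show (i-1) + (N-i) + 1 = N by omega)
    have c2 : ((i-1:ℕ):ℝ) + 1 = (i:ℝ) := by
      exact_mod_cast (show (i-1) + 1 = i by omega)
    rw [c1, c2]
  have hW2 : W ≤ (K:ℝ) * ((N:ℝ)/(i:ℝ)) := by
    rw [hWsplit, Finset.sum_powerset, hQcard]
    have hterm : ∀ j ∈ Finset.range ((i-1) + 1),
        ∑ S₁ ∈ Finset.powersetCard j (Finset.Icc 1 (i-1)),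
          (if S₁.card < K then (1:ℝ) else 0) *
            ((N:ℝ)/((i:ℝ) * (((i-1).choose S₁.card):ℝ)))
        = (if j < K then (N:ℝ)/(i:ℝ) else 0) := by
      intro j hj
      have hj' : j ≤ i - 1 := by simpa [Nat.lt_succ_iff] using Finset.mem_range.1 hj
      rw [Finset.sum_powersetCard j (Finset.Icc 1 (i-1))
        (fun c => (if c < K then (1:ℝ) else 0) * ((N:ℝ)/((i:ℝ) * (((i-1).choose c):ℝ))))]
      rw [hQcard, nsmul_eq_mul]
      have hC : (0:ℝ) < ((i-1).choose j : ℝ) := by exact_mod_cast Nat.choose_pos hj'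
      split
      · rw [one_mul]
        field_simp
      · ring
    rw [Finset.sum_congr rfl hterm, ← Finset.sum_filter]
    calc ∑ _j ∈ (Finset.range ((i-1)+1)).filter (· < K), (N:ℝ)/(i:ℝ)
        = (((Finset.range ((i-1)+1)).filter (· < K)).card : ℝ) * ((N:ℝ)/(i:ℝ)) := by
          rw [Finset.sum_const, nsmul_eq_mul]
      _ ≤ (K:ℝ) * ((N:ℝ)/(i:ℝ)) := by
          apply mul_le_mul_of_nonneg_right _ (by positivity)
          have hsub : (Finset.range ((i-1)+1)).filter (· < K) ⊆ Finset.range K := by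
            intro x hx
            exact Finset.mem_range.2 (Finset.mem_filter.1 hx).2
          have := Finset.card_le_card hsub
          rw [Finset.card_range] at this
          exact_mod_cast this
  -- combine
  apply le_min
  · calc |shapley (Finset.Icc 1 N) (knnUtil K y ytest) i|
        ≤ (1/(N:ℝ)) * ((1/(K:ℝ)) * W) := hbound
      _ ≤ (1/(N:ℝ)) * ((1/(K:ℝ)) * ((K:ℝ) * ((N:ℝ)/(i:ℝ)))) := by
          apply mul_le_mul_of_nonneg_left _ (by positivity)
          exact mul_le_mul_of_nonneg_left hW2 (by positivity)
      _ = 1/(i:ℝ) := by field_simp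
  · calc |shapley (Finset.Icc 1 N) (knnUtil K y ytest) i|
        ≤ (1/(N:ℝ)) * ((1/(K:ℝ)) * W) := hbound
      _ ≤ (1/(N:ℝ)) * ((1/(K:ℝ)) * (N:ℝ)) := by
          apply mul_le_mul_of_nonneg_left _ (by positivity)
          exact mul_le_mul_of_nonneg_left hW1 (by positivity)
      _ = 1/(K:ℝ) := by field_simp
end
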